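/- Let $p$ be a prime and $R$ a commutative ring of characteristic $p$. Fix $\lambda \in R$. For $f \in R$ define the $(p+1)\times(p+1)$ matrix $A^{(p)}(f)$ with entries $\binom{p-i}{j-i} f^{j-i}$ ($i \le j$, zero otherwise). For $g \in R$ define $P(g) = I + \lambda E_{0,p-1} - g E_{0,p}$, where $E_{a,b}$ is the matrix unit, and define $\widetilde{A}(f)$ to be the block diagonal matrix $\operatorname{diag}(1, A^{(p-1)}(f))$ of size $p+1$. If $f, g, g' \in R$ satisfy $f^p - \lambda f = g' - g$, then $A^{(p)}(f) \cdot P(g') = P(g) \cdot \widetilde{A}(f)$. -/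

import Mathlib

set_option maxHeartbeats 1600000


theorem stmt_11 {R : Type*} [CommRing R] (p : ℕ) (hp : p.Prime) [CharP R p] (lam : R)
    (A : R → Matrix (Fin (p + 1)) (Fin (p + 1)) R)
    (hA : ∀ (f : R) (i j : Fin (p + 1)),
      A f i j = if (i : ℕ) ≤ (j : ℕ)
        then (Nat.choose (p - (i : ℕ)) ((j : ℕ) - (i : ℕ)) : R) * f ^ ((j : ℕ) - (i : ℕ))
        else 0)
    (P : R → Matrix (Fin (p + 1)) (Fin (p + 1)) R)
    (hP : ∀ g : R, P g = 1 + Matrix.single 0 ⟨p - 1, by omega⟩ lam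
      - Matrix.single 0 (Fin.last p) g)
    (Atilde : R → Matrix (Fin (p + 1)) (Fin (p + 1)) R)
    (hAtilde : ∀ (f : R) (i j : Fin (p + 1)),
      Atilde f i j =
        if (i : ℕ) = 0 then (if (j : ℕ) = 0 then 1 else 0)
        else if (j : ℕ) = 0 then 0
        else if (i : ℕ) ≤ (j : ℕ)
          then (Nat.choose ((p - 1) - ((i : ℕ) - 1)) ((j : ℕ) - (i : ℕ)) : R)
            * f ^ ((j : ℕ) - (i : ℕ))
          else 0)
    (f g g' : R) (hfg : f ^ p - lam * f = g' - g) :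
    A f * P g' = P g * Atilde f := by
  have hp2 : 2 ≤ p := hp.two_le
  have hm1 : ((⟨p - 1, by omega⟩ : Fin (p+1)) : ℕ) = p - 1 := rfl
  have hne : (⟨p - 1, by omega⟩ : Fin (p+1)) ≠ Fin.last p := by
    simp [Fin.ext_iff]; omega
  have hch : ∀ k : ℕ, k ≠ 0 → k < p → ((p.choose k : ℕ) : R) = 0 := by
    intro k hk0 hkp
    exact (CharP.cast_eq_zero_iff R p _).mpr (hp.dvd_choose_self hk0 hkp)
  ext i j
  rw [hP, hP, mul_sub, mul_add, mul_one, sub_mul, add_mul, one_mul]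
  simp only [Matrix.sub_apply, Matrix.add_apply]
  by_cases hi : i = 0
  · subst hi
    rw [Matrix.single_mul_apply_same, Matrix.single_mul_apply_same]
    by_cases hj2 : j = Fin.last p
    · subst hj2
      rw [Matrix.mul_single_apply_same,
          Matrix.mul_single_apply_of_ne (hbj := Ne.symm hne)]
      rw [hA, hA, hAtilde, hAtilde, hAtilde]
      rw [Fin.val_last, Fin.val_zero]
      have h1 : p - 1 - (p - 1 - 1) = 1 := by omega
      have h2 : p - (p - 1) = 1 := by omega
      split_ifs <;> try (exfalso; omega)
      simp only [Nat.sub_zero, Nat.sub_self, Nat.choose_self, Nat.choose_zero_right, pow_zero,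
        Nat.cast_one, h1, h2, Nat.choose_one_right, pow_one]
      linear_combination hfg
    · by_cases hj1 : j = (⟨p - 1, by omega⟩ : Fin (p+1))
      · subst hj1
        rw [Matrix.mul_single_apply_same,
            Matrix.mul_single_apply_of_ne (hbj := hne)]
        rw [hA, hA, hAtilde, hAtilde, hAtilde]
        rw [Fin.val_last, Fin.val_zero, hm1]
        have h1 : p - 1 - (p - 1 - 1) = 1 := by omega
        have hc : ((p.choose (p-1) : ℕ) : R) = 0 := hch _ (by omega) (by omega)
        split_ifs <;> try (exfalso; omega)
        simp only [Nat.sub_zero, Nat.sub_self, Nat.choose_zero_right, pow_zero, Nat.cast_one,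
          h1, hc]
        ring
      · rw [Matrix.mul_single_apply_of_ne (hbj := hj1),
            Matrix.mul_single_apply_of_ne (hbj := hj2)]
        rw [hA, hAtilde, hAtilde, hAtilde]
        rw [Fin.val_last, Fin.val_zero, hm1]
        have hjp : (j : ℕ) < p := by
          have h1 := j.isLt
          have h2 : (j:ℕ) ≠ p := fun h => hj2 (Fin.ext h)
          omega
        have hjp1 : (j : ℕ) ≠ p - 1 := fun h => hj1 (Fin.ext h)
        by_cases hj0 : (j : ℕ) = 0
        · split_ifs <;> try (exfalso; omega)
          simp [hj0]
        · have hc : ((p.choose (j:ℕ) : ℕ) : R) = 0 := hch _ hj0 hjp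
          split_ifs <;> try (exfalso; omega)
          simp only [Nat.sub_zero, hc]
          ring
  · rw [Matrix.single_mul_apply_of_ne (h := hi),
        Matrix.single_mul_apply_of_ne (h := hi)]
    have hi0 : (i : ℕ) ≠ 0 := fun h => hi (Fin.ext h)
    have hA0 : A f i 0 = 0 := by
      rw [hA, if_neg]
      simp only [Fin.val_zero]
      omega
    have hX : (A f * Matrix.single (0 : Fin (p+1)) (⟨p - 1, by omega⟩ : Fin (p+1)) lam : Matrix (Fin (p+1)) (Fin (p+1)) R) i j = 0 := by
      by_cases hj1 : j = (⟨p - 1, by omega⟩ : Fin (p+1))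
      · subst hj1
        rw [Matrix.mul_single_apply_same lam 0 _ i (A f), hA0, zero_mul]
      · exact Matrix.mul_single_apply_of_ne lam 0 _ i j hj1 (A f)
    have hY : (A f * Matrix.single (0 : Fin (p+1)) (Fin.last p) g' : Matrix (Fin (p+1)) (Fin (p+1)) R) i j = 0 := by
      by_cases hj2 : j = Fin.last p
      · subst hj2
        rw [Matrix.mul_single_apply_same g' 0 _ i (A f), hA0, zero_mul]
      · exact Matrix.mul_single_apply_of_ne g' 0 _ i j hj2 (A f)
    rw [hX, hY, hA, hAtilde]
    have hpe : p - (i:ℕ) = p - 1 - ((i:ℕ) - 1) := by omega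
    split_ifs <;> try (exfalso; omega)
    all_goals try ring
    rw [hpe]
    exact mul_comm _ _
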